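/- Let D be a coassociative counital coalgebra over a field k. Then any co-Artinian left D-contramodule is Noetherian. -/

import Mathlib

open TensorProduct LinearMap

section Contra

variable (k : Type) [Field k]
variable (D : Type) [AddCommGroup D] [Module k D] [Coalgebra k D]

/-- Axioms for a left `D`-contramodule structure given by a contraaction map `π`. -/
structure IsContra {P : Type} [AddCommGroup P] [Module k P]
    (π : (D →ₗ[k] P) →ₗ[k] P) : Prop where
  contraassoc : ∀ f : D ⊗[k] D →ₗ[k] P,
    π (f ∘ₗ CoalgebraStruct.comul (R := k) (A := D)) = π (π ∘ₗ TensorProduct.curry f)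
  contraunit : ∀ p : P,
    π ((CoalgebraStruct.counit (R := k) (A := D)).smulRight p) = p

/-- A `k`-linear map between contramodules is a contramodule morphism. -/
def IsContraHom {P Q : Type} [AddCommGroup P] [Module k P] [AddCommGroup Q] [Module k Q]
    (πP : (D →ₗ[k] P) →ₗ[k] P) (πQ : (D →ₗ[k] Q) →ₗ[k] Q) (f : P →ₗ[k] Q) : Prop :=
  ∀ g : D →ₗ[k] P, f (πP g) = πQ (f ∘ₗ g)

/-- The contraaction of the free left contramodule `Hom_k(D, V)`. -/
noncomputable def freeContraaction (V : Type) [AddCommGroup V] [Module k V] :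
    (D →ₗ[k] (D →ₗ[k] V)) →ₗ[k] (D →ₗ[k] V) :=
  (LinearMap.lcomp k V (CoalgebraStruct.comul (R := k) (A := D))) ∘ₗ
    TensorProduct.uncurry (RingHom.id k) D D V

/-- A contramodule is finitely generated if it is a quotient of a free contramodule
with a finite-dimensional space of generators. -/
def FinGenContra {P : Type} [AddCommGroup P] [Module k P]
    (π : (D →ₗ[k] P) →ₗ[k] P) : Prop :=
  ∃ (V : Type) (_ : AddCommGroup V) (_ : Module k V), FiniteDimensional k V ∧
    ∃ g : (D →ₗ[k] V) →ₗ[k] P, Function.Surjective g ∧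
      IsContraHom k D (freeContraaction k D V) π g

end Contra

section ContraSub

variable (k : Type) [Field k]
variable (D : Type) [AddCommGroup D] [Module k D] [Coalgebra k D]
variable {P : Type} [AddCommGroup P] [Module k P]

/-- A subspace `Q ⊆ P` is a subcontramodule if the contraaction takes every map
`D → P` with values in `Q` into `Q`. -/
def IsSubcontra (π : (D →ₗ[k] P) →ₗ[k] P) (Q : Submodule k P) : Prop :=
  ∀ g : D →ₗ[k] P, LinearMap.range g ≤ Q → π g ∈ Q

/-- A contraaction `π'` on a subspace `Q ⊆ P` is compatible with the contraaction `π`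
on `P` if the inclusion `Q → P` is a morphism of contramodules.  For a subcontramodule
`Q` such a compatible contraaction exists and is unique; it is the canonical
contramodule structure of the subcontramodule. -/
def CompatibleSubContraaction (π : (D →ₗ[k] P) →ₗ[k] P) (Q : Submodule k P)
    (π' : (D →ₗ[k] ↥Q) →ₗ[k] ↥Q) : Prop :=
  ∀ g : D →ₗ[k] ↥Q, (π' g : P) = π (Q.subtype ∘ₗ g)

/-- A contramodule is Noetherian if all its subcontramodules are finitely
generated (as contramodules, with their canonical induced structure). -/
def NoetherianContra (π : (D →ₗ[k] P) →ₗ[k] P) : Prop :=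
  ∀ Q : Submodule k P, IsSubcontra k D π Q →
    ∃ π' : (D →ₗ[k] ↥Q) →ₗ[k] ↥Q,
      CompatibleSubContraaction k D π Q π' ∧ FinGenContra k D π'

/-- A contramodule is co-Artinian if every ascending chain of its subcontramodules
terminates. -/
def CoArtinianContra (π : (D →ₗ[k] P) →ₗ[k] P) : Prop :=
  ∀ f : ℕ → Submodule k P, (∀ n, IsSubcontra k D π (f n)) →
    (∀ n, f n ≤ f (n + 1)) → ∃ n, ∀ m, n ≤ m → f m = f n

end ContraSub

section Aux

variable (k : Type) [Field k]
variable (D : Type) [AddCommGroup D] [Module k D] [Coalgebra k D]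
variable {P : Type} [AddCommGroup P] [Module k P]
variable (π : (D →ₗ[k] P) →ₗ[k] P)

/-- The contramodule morphism `Hom(D,V) → P`, `f ↦ π (j ∘ f)`, for a linear map `j : V → P`. -/
noncomputable def genMap {V : Type} [AddCommGroup V] [Module k V] (j : V →ₗ[k] P) :
    (D →ₗ[k] V) →ₗ[k] P :=
  π ∘ₗ LinearMap.llcomp k D V P j

lemma genMap_apply {V : Type} [AddCommGroup V] [Module k V] (j : V →ₗ[k] P)
    (f : D →ₗ[k] V) : genMap k D π j f = π (j ∘ₗ f) := rfl

lemma genMap_isContraHom (hP : IsContra k D π) {V : Type} [AddCommGroup V] [Module k V]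
    (j : V →ₗ[k] P) : IsContraHom k D (freeContraaction k D V) π (genMap k D π j) := by
  intro f
  have h1 : j ∘ₗ freeContraaction k D V f
      = (j ∘ₗ TensorProduct.uncurry (RingHom.id k) D D V f) ∘ₗ CoalgebraStruct.comul (R := k) (A := D) := by
    ext d; rfl
  rw [genMap_apply, h1, hP.contraassoc]
  congr 1

lemma self_mem_range_genMap (hP : IsContra k D π) {V : Type} [AddCommGroup V] [Module k V]
    (j : V →ₗ[k] P) (v : V) : j v ∈ LinearMap.range (genMap k D π j) := by
  refine ⟨(CoalgebraStruct.counit (R := k) (A := D)).smulRight v, ?_⟩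
  have h : j ∘ₗ (CoalgebraStruct.counit (R := k) (A := D)).smulRight v
      = (CoalgebraStruct.counit (R := k) (A := D)).smulRight (j v) := by
    ext d; simp
  rw [genMap_apply, h, hP.contraunit]

lemma range_genMap_le {Q : Submodule k P} (hQ : IsSubcontra k D π Q) {V : Type}
    [AddCommGroup V] [Module k V] (j : V →ₗ[k] P) (hj : LinearMap.range j ≤ Q) :
    LinearMap.range (genMap k D π j) ≤ Q := by
  rintro _ ⟨f, rfl⟩
  rw [genMap_apply]
  exact hQ _ (le_trans (LinearMap.range_comp_le_range f j) hj)

lemma isSubcontra_range_genMap (hP : IsContra k D π) {V : Type} [AddCommGroup V] [Module k V]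
    (j : V →ₗ[k] P) : IsSubcontra k D π (LinearMap.range (genMap k D π j)) := by
  intro g hg
  set G := genMap k D π j with hG
  obtain ⟨s, hs⟩ := G.rangeRestrict.exists_rightInverse_of_surjective
    (LinearMap.range_eq_top.2 G.surjective_rangeRestrict)
  set g1 : D →ₗ[k] ↥(LinearMap.range G) := g.codRestrict _ (fun d => hg ⟨d, rfl⟩) with hg1
  have hfac : G ∘ₗ (s ∘ₗ g1) = g := by
    ext d
    have h2 : G.rangeRestrict (s (g1 d)) = g1 d := by
      have := congrArg (fun h => h (g1 d)) hs
      exact this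
    simp only [LinearMap.comp_apply]
    calc G (s (g1 d)) = ((G.rangeRestrict (s (g1 d)) : ↥(LinearMap.range G)) : P) := rfl
      _ = ((g1 d : ↥(LinearMap.range G)) : P) := by rw [h2]
      _ = g d := rfl
  rw [← hfac, ← genMap_isContraHom k D π hP j (s ∘ₗ g1)]
  exact ⟨_, rfl⟩

open Classical in
/-- Pick an element of `Q` not in `S`, if one exists. -/
noncomputable def contraPick (Q S : Submodule k P) : P :=
  if h : ∃ q, q ∈ Q ∧ q ∉ S then h.choose else 0

lemma contraPick_mem (Q S : Submodule k P) : contraPick k Q S ∈ Q := by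
  unfold contraPick
  by_cases h : ∃ q, q ∈ Q ∧ q ∉ S
  · rw [dif_pos h]; exact h.choose_spec.1
  · rw [dif_neg h]; exact Q.zero_mem

lemma contraPick_not_mem (Q S : Submodule k P) (h : ∃ q, q ∈ Q ∧ q ∉ S) :
    contraPick k Q S ∉ S := by
  unfold contraPick
  rw [dif_pos h]
  exact h.choose_spec.2

/-- A chain of finite-dimensional subspaces of generators. -/
noncomputable def contraChain (Q : Submodule k P) : ℕ → Submodule k P
  | 0 => ⊥
  | n + 1 => contraChain Q n ⊔ (Submodule.span k {contraPick k Q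
      (LinearMap.range (genMap k D π (contraChain Q n).subtype))})

lemma contraChain_fd (Q : Submodule k P) (n : ℕ) :
    FiniteDimensional k ↥(contraChain k D π Q n) := by
  induction n with
  | zero => rw [contraChain]; infer_instance
  | succ n ih => rw [contraChain]; exact Submodule.finiteDimensional_sup _ _

lemma contraChain_le (Q : Submodule k P) (n : ℕ) : contraChain k D π Q n ≤ Q := by
  induction n with
  | zero => rw [contraChain]; exact bot_le
  | succ n ih =>
    rw [contraChain]
    refine sup_le ih ?_
    rw [Submodule.span_le, Set.singleton_subset_iff]
    exact contraPick_mem k Q _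

end Aux

/-- Lemma 1.6(a): any co-Artinian left `D`-contramodule is Noetherian. -/
theorem coArtinian_contramodule_noetherian
    (k : Type) [Field k]
    (D : Type) [AddCommGroup D] [Module k D] [Coalgebra k D]
    (P : Type) [AddCommGroup P] [Module k P]
    (π : (D →ₗ[k] P) →ₗ[k] P) (hP : IsContra k D π)
    (hca : CoArtinianContra k D π) :
    NoetherianContra k D π := by
  intro Q hQ
  have hmem : ∀ g : D →ₗ[k] ↥Q, π (Q.subtype ∘ₗ g) ∈ Q := fun g =>
    hQ _ (le_trans (LinearMap.range_comp_le_range g Q.subtype) (by rw [Submodule.range_subtype]))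
  refine ⟨LinearMap.codRestrict Q (π ∘ₗ LinearMap.llcomp k D ↥Q P Q.subtype) hmem,
    fun g => rfl, ?_⟩
  set W : ℕ → Submodule k P := contraChain k D π Q with hW
  set S : ℕ → Submodule k P := fun n => LinearMap.range (genMap k D π (W n).subtype) with hS
  have hSsub : ∀ n, IsSubcontra k D π (S n) := fun n =>
    isSubcontra_range_genMap k D π hP _
  have hWleS : ∀ n, W n ≤ S n := by
    intro n x hx
    have := self_mem_range_genMap k D π hP (W n).subtype ⟨x, hx⟩
    exact this
  have hSle : ∀ n (Q' : Submodule k P), IsSubcontra k D π Q' → W n ≤ Q' → S n ≤ Q' := by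
    intro n Q' hQ' hWQ'
    refine range_genMap_le k D π hQ' _ ?_
    rw [Submodule.range_subtype]; exact hWQ'
  have hSleQ : ∀ n, S n ≤ Q := fun n => hSle n Q hQ (contraChain_le k D π Q n)
  have hmono : ∀ n, S n ≤ S (n + 1) := fun n =>
    hSle n (S (n + 1)) (hSsub (n + 1))
      (le_trans (le_sup_left : W n ≤ W n ⊔ _) (hWleS (n + 1)))
  obtain ⟨n, hn⟩ := hca S hSsub hmono
  have hSQ : S n = Q := by
    by_contra hne
    have hex : ∃ q, q ∈ Q ∧ q ∉ S n := by
      by_contra hno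
      push_neg at hno
      exact hne (le_antisymm (hSleQ n) hno)
    set q := contraPick k Q (S n) with hq
    have hq1 : q ∈ W (n + 1) := by
      rw [hW]
      rw [contraChain]
      exact Submodule.mem_sup_right (Submodule.mem_span_singleton_self _)
    have hq2 : q ∈ S n := by
      rw [← hn (n + 1) (Nat.le_succ n)]
      exact hWleS (n + 1) hq1
    exact contraPick_not_mem k Q (S n) hex hq2
  haveI : FiniteDimensional k ↥(W n) := contraChain_fd k D π Q n
  refine ⟨↥(W n), inferInstance, inferInstance, inferInstance, ?_⟩
  set G := genMap k D π (W n).subtype with hG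
  have hr : ∀ f, G f ∈ Q := by
    intro f
    have : G f ∈ S n := ⟨f, rfl⟩
    rw [hSQ] at this
    exact this
  refine ⟨G.codRestrict Q hr, ?_, ?_⟩
  · rintro ⟨x, hx⟩
    have : x ∈ S n := hSQ ▸ hx
    obtain ⟨f, hf⟩ := this
    exact ⟨f, Subtype.ext hf⟩
  · intro f
    apply Subtype.ext
    show G (freeContraaction k D ↥(W n) f) = π (Q.subtype ∘ₗ ((G.codRestrict Q hr) ∘ₗ f))
    have hcomp : Q.subtype ∘ₗ ((G.codRestrict Q hr) ∘ₗ f) = G ∘ₗ f := by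
      ext d; rfl
    rw [hcomp]
    exact genMap_isContraHom k D π hP _ f
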